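/- For 0 < z < 1, the parametrization λ = (1/z - z)^{3/2}, r = -√(z(1-z²)), h = (z/2)(3+z²), ℓ = ∓(3z²-1)/(2z^{3/2}) satisfies r(λ - r)(λ - 2r) + λ√(4 + r²(r-λ)²) = 0, i.e. it lies on the degeneracy curve π₂₄. -/

import Mathlib

/-- For `0 < z < 1`, the parametrization `λ = (1/z - z)^{3/2}`, `r = -√(z(1-z²))`
satisfies `r(λ-r)(λ-2r) + λ√(4 + r²(r-λ)²) = 0`, i.e. it lies on the degeneracy
curve π₂₄. -/
theorem stmt_16 (z l r : ℝ) (hz : 0 < z) (hz1 : z < 1)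
    (hl : l = (1/z - z) ^ ((3:ℝ)/2))
    (hr : r = -Real.sqrt (z*(1 - z^2))) :
    r*(l - r)*(l - 2*r) + l*Real.sqrt (4 + r^2*(r - l)^2) = 0 := by
  have hzne : z ≠ 0 := ne_of_gt hz
  set u : ℝ := 1/z - z with hu
  have hupos : 0 < u := by
    rw [hu, sub_pos, lt_div_iff₀ hz]
    nlinarith
  have hsq : Real.sqrt u ^ 2 = u := Real.sq_sqrt hupos.le
  have hl' : l = u * Real.sqrt u := by
    rw [hl, show (3:ℝ)/2 = 1 + 1/2 by norm_num, Real.rpow_add hupos, Real.rpow_one,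
      ← Real.sqrt_eq_rpow]
  have hr' : r = -(z * Real.sqrt u) := by
    rw [hr]
    congr 1
    rw [show z*(1-z^2) = z^2 * u by rw [hu]; field_simp,
      Real.sqrt_mul (sq_nonneg z), Real.sqrt_sq hz.le]
  have hzu : z * (u + z) = 1 := by rw [hu]; field_simp; ring
  have huz : u = (1 - z^2)/z := by rw [hu]; field_simp
  have huz2 : (1+z^2)/z = u + 2*z := by rw [hu]; field_simp; ring
  have e1 : r^2*(r-l)^2 = u^2 := by
    rw [hr', hl']
    linear_combination (z^2*(z+u)^2*(Real.sqrt u^2+u)) * hsq + (u^2*(z*(u+z)+1)) * hzu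
  have hbig : Real.sqrt (4 + r^2*(r-l)^2) = (1+z^2)/z := by
    have h1 : 4 + r^2*(r-l)^2 = ((1+z^2)/z)^2 := by
      rw [e1, huz]
      field_simp
      ring
    rw [h1, Real.sqrt_sq (by positivity)]
  rw [hbig, huz2, hr', hl']
  linear_combination (-(z*(u+z)*(u+2*z)*Real.sqrt u)) * hsq + (-(u*(u+2*z)*Real.sqrt u)) * hzu
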